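/- For every function f : ℕ → ℕ and all d ≥ 1, r ≥ 1 there exists R such that every f-limited colouring C : {0,...,R}^d → ℕ^r admits x_1 < x_2 < ... < x_{d+1} ≤ R with C(x_1,...,x_d) ≤ C(x_2,...,x_{d+1}) coordinatewise (the finite adjacent Ramsey theorem AR_f). -/

import Mathlib

/-- Tower function: `tower 0 i = i`, `tower (n+1) i = 2 ^ tower n i`. -/
def tower : ℕ → ℕ → ℕ
  | 0, i => i
  | n+1, i => 2 ^ tower n i

/-- `ARProp f d r R` : every `f`-limited colouring `C : {0,…,R}^d → ℕ^r` admits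
`x₁ < … < x_{d+1} ≤ R` with `C(x₁,…,x_d) ≤ C(x₂,…,x_{d+1})` coordinatewise. -/
def ARProp (f : ℕ → ℕ) (d r R : ℕ) : Prop :=
  ∀ C : (Fin d → ℕ) → (Fin r → ℕ),
    (∀ x : Fin d → ℕ, (∀ i, x i ≤ R) → ∀ j, C x j ≤ f (Finset.univ.sup x) + 1) →
    ∃ x : Fin (d+1) → ℕ, StrictMono x ∧ x (Fin.last d) ≤ R ∧
      ∀ j, C (fun i => x i.castSucc) j ≤ C (fun i => x i.succ) j

/-- `ARnum f d r` : the least `R` witnessing the adjacent Ramsey theorem `AR_f^d(r)`. -/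
noncomputable def ARnum (f : ℕ → ℕ) (d r : ℕ) : ℕ := sInf {R | ARProp f d r R}


open Classical in
theorem my_ramsey (m : ℕ) {κ : Type} [Fintype κ] [Nonempty κ] (c : (Fin m → ℕ) → κ) :
    ∃ g : ℕ → ℕ, StrictMono g ∧ ∃ t, ∀ x : Fin m → ℕ, StrictMono x → c (g ∘ x) = t := by
  induction m generalizing κ with
  | zero =>
    refine ⟨id, strictMono_id, c (fun i => i.elim0), fun x _ => ?_⟩
    congr 1
    funext i; exact i.elim0
  | succ m ih =>
    have step : ∀ h : ℕ → ℕ, StrictMono h →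
        ∃ g : ℕ → ℕ, StrictMono g ∧ ∃ t : κ, ∀ y : Fin m → ℕ, StrictMono y →
          c (Fin.cons (h 0) (fun k => h (g (y k) + 1))) = t := by
      intro h hh
      obtain ⟨g, hg, t, ht⟩ := ih (fun y : Fin m → ℕ => c (Fin.cons (h 0) (fun k => h (y k + 1))))
      exact ⟨g, hg, t, fun y hy => ht y hy⟩
    choose G hGmono T hT using step
    let next : {h : ℕ → ℕ // StrictMono h} → {h : ℕ → ℕ // StrictMono h} := fun h =>
      ⟨fun n => h.1 (G h.1 h.2 n + 1), fun a b hab =>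
        h.2 (Nat.succ_lt_succ (hGmono h.1 h.2 hab))⟩
    let hseq : ℕ → {h : ℕ → ℕ // StrictMono h} := fun i => next^[i] ⟨id, strictMono_id⟩
    have hseq_succ : ∀ i, hseq (i+1) = next (hseq i) := by
      intro i
      simp only [hseq, Function.iterate_succ_apply']
    let a : ℕ → ℕ := fun i => (hseq i).1 0
    let tseq : ℕ → κ := fun i => T (hseq i).1 (hseq i).2
    -- range nesting
    have nest1 : ∀ i, Set.range (hseq (i+1)).1 ⊆ Set.range (hseq i).1 := by
      intro i y hy
      obtain ⟨n, rfl⟩ := hy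
      rw [hseq_succ]
      exact ⟨_, rfl⟩
    have nest : ∀ i j, i ≤ j → Set.range (hseq j).1 ⊆ Set.range (hseq i).1 := by
      intro i j hij
      induction j with
      | zero => cases Nat.le_zero.mp hij; exact subset_rfl
      | succ j ihj =>
        rcases Nat.lt_or_ge i (j+1) with h | h
        · exact (ihj (Nat.lt_succ_iff.mp h)).trans' (nest1 j) |>.trans subset_rfl
        · cases Nat.le_antisymm hij h; exact subset_rfl
    have ha : StrictMono a := by
      apply strictMono_nat_of_lt_succ
      intro i
      have : a (i+1) = (hseq i).1 (G (hseq i).1 (hseq i).2 0 + 1) := by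
        simp only [a, hseq_succ i]
        rfl
      rw [this]
      exact (hseq i).2 (Nat.succ_pos _)
    -- key homogeneity
    have key : ∀ (i : ℕ) (z : Fin m → ℕ), StrictMono z → (∀ k, i < z k) →
        c (Fin.cons (a i) (fun k => a (z k))) = tseq i := by
      intro i z hz hiz
      have hmem : ∀ k, a (z k) ∈ Set.range (hseq (i+1)).1 := by
        intro k
        exact nest (i+1) (z k) (hiz k) ⟨0, rfl⟩
      choose ψ hψ using hmem
      have hψmono : StrictMono ψ := by
        intro k k' hk
        have := ha (hz hk)
        rw [← hψ k, ← hψ k'] at this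
        exact (hseq (i+1)).2.lt_iff_lt.mp this
      have heq : (fun k => a (z k)) = fun k => (hseq i).1 (G (hseq i).1 (hseq i).2 (ψ k) + 1) := by
        funext k
        rw [← hψ k, hseq_succ]
      rw [heq]
      exact hT (hseq i).1 (hseq i).2 ψ hψmono
    -- pigeonhole
    obtain ⟨t, htinf⟩ := Finite.exists_infinite_fiber tseq
    have hset : (tseq ⁻¹' {t} : Set ℕ).Infinite := Set.infinite_coe_iff.mp htinf
    haveI : Infinite (tseq ⁻¹' {t} : Set ℕ) := htinf
    let e := Nat.orderEmbeddingOfSet (tseq ⁻¹' {t})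
    have he : ∀ n, tseq (e n) = t := by
      intro n
      have : e n ∈ tseq ⁻¹' {t} := by
        rw [← Nat.orderEmbeddingOfSet_range (tseq ⁻¹' {t})]
        exact ⟨n, rfl⟩
      exact this
    refine ⟨a ∘ e, ha.comp e.strictMono, t, ?_⟩
    intro x hx
    have hcons : (a ∘ e) ∘ x = Fin.cons (a (e (x 0))) (fun k => a (e (x k.succ))) := by
      funext i
      refine Fin.cases ?_ ?_ i
      · simp
      · intro k; simp
    rw [hcons, key (e (x 0)) (fun k => e (x k.succ))
      (fun k k' hk => e.strictMono (hx (Fin.succ_lt_succ_iff.mpr hk)))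
      (fun k => e.strictMono (hx (Fin.succ_pos k))), he]


theorem my_infAR (d r : ℕ) (D : (Fin d → ℕ) → Fin r → ℕ) :
    ∃ x : Fin (d+1) → ℕ, StrictMono x ∧
      ∀ j, D (fun i => x i.castSucc) j ≤ D (fun i => x i.succ) j := by
  obtain ⟨g, hg, t, ht⟩ := my_ramsey (d+1) (κ := Fin r → Bool)
    (fun y j => decide (D (fun i => y i.succ) j < D (fun i => y i.castSucc) j))
  by_cases hfalse : ∀ j, t j = false
  · refine ⟨fun i => g i, fun i i' h => hg h, ?_⟩
    intro j
    have hx : StrictMono (fun i : Fin (d+1) => (i : ℕ)) := fun i i' h => h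
    have := congrFun (ht (fun i => (i : ℕ)) hx) j
    rw [hfalse j, decide_eq_false_iff_not, not_lt] at this
    exact this
  · push_neg at hfalse
    obtain ⟨j, hj⟩ := hfalse
    rw [Bool.ne_false_iff] at hj
    exfalso
    set u : ℕ → ℕ := fun n => D (fun i : Fin d => g (n + i)) j with hu
    have hdec : ∀ n, u (n+1) < u n := by
      intro n
      have hx : StrictMono (fun i : Fin (d+1) => (n + i : ℕ)) := fun i i' h =>
        Nat.add_lt_add_left h n
      have := congrFun (ht (fun i => (n + i : ℕ)) hx) j
      rw [hj, decide_eq_true_eq] at this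
      have e1 : (fun i : Fin d => ((g ∘ fun i : Fin (d+1) => (n + i : ℕ)) i.succ)) =
          fun i : Fin d => g (n + 1 + i) := by
        funext i
        simp only [Function.comp, Fin.val_succ]
        congr 1
        omega
      have e2 : (fun i : Fin d => ((g ∘ fun i : Fin (d+1) => (n + i : ℕ)) i.castSucc)) =
          fun i : Fin d => g (n + i) := by
        funext i
        simp [Function.comp]
      rw [e1, e2] at this
      exact this
    have hle : ∀ n, u n + n ≤ u 0 := by
      intro n
      induction n with
      | zero => simp
      | succ k ihk => have := hdec k; omega
    have := hle (u 0 + 1)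
    omega

/-- The finite adjacent Ramsey theorem `AR_f`. -/
theorem adjacent_ramsey (f : ℕ → ℕ) (d r : ℕ) (hd : 1 ≤ d) (hr : 1 ≤ r) :
    ∃ R, ARProp f d r R := by
  by_contra hcon
  push_neg at hcon
  have hC : ∀ R : ℕ, ∃ C : (Fin d → ℕ) → (Fin r → ℕ),
      (∀ x : Fin d → ℕ, (∀ i, x i ≤ R) → ∀ j, C x j ≤ f (Finset.univ.sup x) + 1) ∧
      ¬ (∃ x : Fin (d+1) → ℕ, StrictMono x ∧ x (Fin.last d) ≤ R ∧
        ∀ j, C (fun i => x i.castSucc) j ≤ C (fun i => x i.succ) j) := by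
    intro R
    have h := hcon R
    rw [ARProp] at h
    push_neg at h
    obtain ⟨C, h1, h2⟩ := h
    exact ⟨C, h1, by push_neg; exact h2⟩
  choose C hlim hbad using hC
  -- ultrafilter extending atTop
  haveI : (Filter.atTop : Filter ℕ).NeBot := Filter.atTop_neBot
  let U : Ultrafilter ℕ := Ultrafilter.of Filter.atTop
  have hU : ∀ s : Set ℕ, s ∈ (Filter.atTop : Filter ℕ) → s ∈ U :=
    fun s hs => Ultrafilter.of_le Filter.atTop hs
  have key : ∀ (x : Fin d → ℕ) (j : Fin r), ∃ v : ℕ, {R | C R x j = v} ∈ U := by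
    intro x j
    have hmem : (Set.Iic (f (Finset.univ.sup x) + 1)) ∈ U.map (fun R => C R x j) := by
      rw [Ultrafilter.mem_map]
      apply hU
      filter_upwards [Filter.eventually_ge_atTop (Finset.univ.sup x)] with R hR
      exact hlim R x (fun i => le_trans (Finset.le_sup (Finset.mem_univ i)) hR) j
    obtain ⟨v, _, hv⟩ := Ultrafilter.eq_pure_of_finite_mem (Set.finite_Iic _) hmem
    refine ⟨v, ?_⟩
    have : {v} ∈ U.map (fun R => C R x j) := by rw [hv]; exact rfl
    rw [Ultrafilter.mem_map] at this
    convert this using 1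
    rfl
  choose D hD using key
  obtain ⟨x, hx, hxle⟩ := my_infAR d r D
  have hS : ({R | x (Fin.last d) ≤ R} ∩
      ((⋂ j, {R | C R (fun i => x i.castSucc) j = D (fun i => x i.castSucc) j}) ∩
       (⋂ j, {R | C R (fun i => x i.succ) j = D (fun i => x i.succ) j}))) ∈ U := by
    refine Filter.inter_mem (hU _ (Filter.eventually_ge_atTop _)) (Filter.inter_mem ?_ ?_)
    · exact (Filter.iInter_mem).2 fun j => hD _ j
    · exact (Filter.iInter_mem).2 fun j => hD _ j
  obtain ⟨R, hR1, hR2, hR3⟩ := Filter.nonempty_of_mem hS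
  refine hbad R ⟨x, hx, hR1, fun j => ?_⟩
  have e1 := Set.mem_iInter.mp hR2 j
  have e2 := Set.mem_iInter.mp hR3 j
  rw [Set.mem_setOf_eq] at e1 e2
  rw [e1, e2]
  exact hxle j
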